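/- Let k be a positive integer and let a, b, c, d ≥ 0 with prescribed gcd-conditions: values A_1,...,A_a with gcd(A_l,k)=1, values B_1,...,B_b with gcd(B_j,k)=N_j (N_j ∣ k given), values C_1,...,C_c with gcd(C_s,k) even, values D_1,...,D_r with gcd(D_r,k)=M_r (M_r ∣ k, M_r < k given), all in ℤ/kℤ, subject to A_1+...+D_d ≡ 0 mod k. Then the number of such tuples equals (1/k)·Σ_{δ∣k} c(k,1,δ)^a · Π_j c(k,N_j,δ) · γ(k,δ,c) · Π_r c(k,M_r,δ), where γ(k,δ,c) = φ(δ) if c=0; 0 if k odd and c>0; 0 if k even, c>0, δ>2; (k/2)^c if k even, c>0, δ∈{1,2}; and c(k,l,δ) = (φ(k/l)/φ(δ/gcd(δ,l)))·μ(δ/gcd(δ,l)). -/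

import Mathlib

/-- `c(k,l,δ) = (φ(k/l)/φ(δ/gcd(δ,l))) · μ(δ/gcd(δ,l))`. -/
noncomputable def cCoeff (k l δ : ℕ) : ℚ :=
  ((Nat.totient (k / l) : ℚ) / (Nat.totient (δ / Nat.gcd δ l) : ℚ)) *
    (ArithmeticFunction.moebius (δ / Nat.gcd δ l) : ℤ)

/-- `γ(k,δ,c)`: `φ(δ)` if `c = 0`; `0` if `k` odd and `c > 0`; `(k/2)^c` if `k` even,
`c > 0`, `δ ∈ {1,2}`; `0` if `k` even, `c > 0`, `δ > 2`. -/
noncomputable def gammaCoeff (k δ c : ℕ) : ℚ :=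
  if c = 0 then (Nat.totient δ : ℚ)
  else if ¬ Even k then 0
  else if δ = 1 ∨ δ = 2 then ((k : ℚ) / 2) ^ c
  else 0

open Finset ZMod Complex

namespace CRT

lemma psi_mul_div {k l : ℕ} [NeZero k] [NeZero (k / l)] (hl : l ∣ k) (t : ℕ) :
    ZMod.stdAddChar (((l * t : ℕ) : ZMod k)) = ZMod.stdAddChar ((t : ℕ) : ZMod (k / l)) := by
  have hk : (k : ℕ) ≠ 0 := NeZero.ne k
  have h1 : (((l * t : ℕ) : ℤ) : ZMod k) = ((l * t : ℕ) : ZMod k) := by push_cast; ring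
  have h2 : (((t : ℕ) : ℤ) : ZMod (k / l)) = ((t : ℕ) : ZMod (k / l)) := by push_cast; ring
  rw [← h1, ← h2, ZMod.stdAddChar_coe, ZMod.stdAddChar_coe]
  congr 1
  have hmul : (l : ℂ) * ((k / l : ℕ) : ℂ) = (k : ℂ) := by
    exact_mod_cast congrArg (Nat.cast : ℕ → ℂ) (Nat.mul_div_cancel' hl)
  have hk0 : (k : ℂ) ≠ 0 := Nat.cast_ne_zero.2 hk
  have hkl0 : ((k / l : ℕ) : ℂ) ≠ 0 := Nat.cast_ne_zero.2 (NeZero.ne _)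
  field_simp
  rw [← hmul]; push_cast; ring

lemma sum_psi (n : ℕ) [NeZero n] :
    ∑ x : ZMod n, ZMod.stdAddChar x = if n = 1 then 1 else 0 := by
  split_ifs with h
  · subst h
    rw [show (Finset.univ : Finset (ZMod 1)) = {0} from rfl]
    simp
  · apply AddChar.sum_eq_zero_of_ne_one
    intro hcon
    have h1 : ZMod.stdAddChar ((1 : ℕ) : ZMod n) = ZMod.stdAddChar ((0 : ℕ) : ZMod n) := by
      rw [hcon]; simp
    have h2 := ZMod.injective_stdAddChar h1
    have h3 : ((1 : ℕ) : ZMod n) = 0 := by simpa using h2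
    rw [ZMod.natCast_eq_zero_iff] at h3
    exact h (Nat.dvd_one.mp h3)

lemma sum_dvd_filter {k l : ℕ} [NeZero k] [NeZero (k / l)] (hl : l ∣ k) (h : ZMod k → ℂ) :
    ∑ x ∈ univ.filter (fun x : ZMod k => l ∣ x.val), h x
      = ∑ t : ZMod (k / l), h ((l * t.val : ℕ) : ZMod k) := by
  have hk : k ≠ 0 := NeZero.ne k
  have hl0 : 0 < l := Nat.pos_of_ne_zero (by rintro rfl; exact hk (Nat.eq_zero_of_zero_dvd hl))
  have hval : ∀ t : ZMod (k / l), ((l * t.val : ℕ) : ZMod k).val = l * t.val := by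
    intro t
    apply ZMod.val_cast_of_lt
    calc l * t.val < l * (k / l) := (Nat.mul_lt_mul_left hl0).2 (ZMod.val_lt t)
      _ = k := Nat.mul_div_cancel' hl
  symm
  apply Finset.sum_nbij' (i := fun t : ZMod (k / l) => ((l * t.val : ℕ) : ZMod k))
    (j := fun x : ZMod k => ((x.val / l : ℕ) : ZMod (k / l)))
  · intro t _
    simp only [mem_filter, mem_univ, true_and, hval t]
    exact Dvd.intro _ rfl
  · intro x _; exact mem_univ _
  · intro t _
    rw [hval t, Nat.mul_div_cancel_left _ hl0, ZMod.natCast_zmod_val]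
  · intro x hx
    simp only [mem_filter, mem_univ, true_and] at hx
    have hlt : x.val / l < k / l := Nat.div_lt_div_of_lt_of_dvd hl (ZMod.val_lt x)
    rw [ZMod.val_cast_of_lt hlt, Nat.mul_div_cancel' hx, ZMod.natCast_zmod_val]
  · intro t _; rfl

lemma sum_gcd_eq {k l : ℕ} [NeZero k] [NeZero (k / l)] (hl : l ∣ k) (h : ZMod k → ℂ) :
    ∑ x ∈ univ.filter (fun x : ZMod k => Nat.gcd x.val k = l), h x
      = ∑ t ∈ univ.filter (fun t : ZMod (k / l) => Nat.gcd t.val (k / l) = 1),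
          h ((l * t.val : ℕ) : ZMod k) := by
  have hk : k ≠ 0 := NeZero.ne k
  have hl0 : 0 < l := Nat.pos_of_ne_zero (by rintro rfl; exact hk (Nat.eq_zero_of_zero_dvd hl))
  have hval : ∀ t : ZMod (k / l), ((l * t.val : ℕ) : ZMod k).val = l * t.val := by
    intro t
    apply ZMod.val_cast_of_lt
    calc l * t.val < l * (k / l) := (Nat.mul_lt_mul_left hl0).2 (ZMod.val_lt t)
      _ = k := Nat.mul_div_cancel' hl
  have key := sum_dvd_filter hl (fun x => if Nat.gcd x.val k = l then h x else 0)
  have lhs_eq : ∑ x ∈ univ.filter (fun x : ZMod k => Nat.gcd x.val k = l), h x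
      = ∑ x ∈ univ.filter (fun x : ZMod k => l ∣ x.val),
          (if Nat.gcd x.val k = l then h x else 0) := by
    rw [Finset.sum_filter, Finset.sum_filter]
    apply Finset.sum_congr rfl
    intro x _
    by_cases hg : Nat.gcd x.val k = l
    · have : l ∣ x.val := hg ▸ Nat.gcd_dvd_left _ _
      simp [hg, this]
    · simp [hg]
  have hgml : ∀ t : ZMod (k / l), Nat.gcd (l * t.val) k = l * Nat.gcd t.val (k / l) := by
    intro t
    have h0 : Nat.gcd (l * t.val) (l * (k / l)) = l * Nat.gcd t.val (k / l) :=
      Nat.gcd_mul_left l t.val (k / l)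
    rwa [Nat.mul_div_cancel' hl] at h0
  have cond : ∀ t : ZMod (k / l),
      (Nat.gcd ((l * t.val : ℕ) : ZMod k).val k = l) ↔ Nat.gcd t.val (k / l) = 1 := by
    intro t
    rw [hval t, hgml t]
    constructor
    · intro hgl
      have h1 : l * Nat.gcd t.val (k / l) = l * 1 := by rw [mul_one]; exact hgl
      exact Nat.eq_of_mul_eq_mul_left hl0 h1
    · intro hg1
      rw [hg1, mul_one]
  rw [lhs_eq, key, Finset.sum_filter]
  exact Finset.sum_congr rfl (fun t _ => by rw [if_congr (cond t) rfl rfl])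

lemma sum_units_eq {n : ℕ} [NeZero n] (h : ZMod n → ℂ) :
    ∑ x ∈ univ.filter (fun x : ZMod n => Nat.gcd x.val n = 1), h x
      = ∑ u : (ZMod n)ˣ, h u := by
  symm
  refine Finset.sum_bij' (i := fun (u : (ZMod n)ˣ) (_ : u ∈ univ) => (u : ZMod n))
    (j := fun x hx => ZMod.unitOfCoprime x.val (by
      simp only [mem_filter, mem_univ, true_and] at hx; exact hx)) ?_ ?_ ?_ ?_ ?_
  · intro u _
    simp only [mem_filter, mem_univ, true_and]
    exact ZMod.val_coe_unit_coprime u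
  · intro x _; exact mem_univ _
  · intro u _
    apply Units.ext
    simp [ZMod.coe_unitOfCoprime, ZMod.natCast_zmod_val]
  · intro x _
    simp [ZMod.coe_unitOfCoprime, ZMod.natCast_zmod_val]
  · intro u _; rfl


lemma hom_sum {G H : Type*} [CommGroup G] [CommGroup H] [Fintype G] [Fintype H] [DecidableEq H]
    (f : G →* H) (hf : Function.Surjective f) (h : H → ℂ) :
    ∑ y : G, h (f y) = ((Fintype.card G : ℂ) / (Fintype.card H : ℂ)) * ∑ u : H, h u := by
  classical
  have key : ∀ u : H, ((univ.filter (fun y : G => f y = u)).card : ℕ)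
      = (univ.filter (fun y : G => f y = 1)).card := by
    intro u
    obtain ⟨y₀, hy₀⟩ := hf u
    refine Finset.card_bij' (fun y _ => y₀⁻¹ * y) (fun z _ => y₀ * z) ?_ ?_ ?_ ?_
    · intro y hy
      simp only [mem_filter, mem_univ, true_and] at hy ⊢
      rw [map_mul, map_inv, hy₀, hy, inv_mul_cancel]
    · intro z hz
      simp only [mem_filter, mem_univ, true_and] at hz ⊢
      rw [map_mul, hy₀, hz, mul_one]
    · intro y _; group
    · intro z _; group
  have hcard : (Fintype.card G : ℂ)
      = (Fintype.card H : ℂ) * ((univ.filter (fun y : G => f y = 1)).card : ℂ) := by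
    have h1 : (univ : Finset G).card = ∑ u ∈ (univ : Finset H),
        (univ.filter (fun y : G => f y = u)).card :=
      Finset.card_eq_sum_card_fiberwise (by intro x _; exact mem_univ _)
    rw [Fintype.card, h1]
    push_cast
    rw [Finset.sum_congr rfl (fun u _ => by rw [key u])]
    rw [Finset.sum_const, Fintype.card]
    push_cast
    ring
  have hH0 : (Fintype.card H : ℂ) ≠ 0 := Nat.cast_ne_zero.2 Fintype.card_ne_zero
  calc ∑ y : G, h (f y)
      = ∑ u ∈ (univ : Finset H), ∑ y ∈ univ.filter (fun y : G => f y = u), h (f y) :=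
        (Finset.sum_fiberwise_of_maps_to (by intro x _; exact mem_univ _) _).symm
    _ = ∑ u : H, ((univ.filter (fun y : G => f y = 1)).card : ℂ) * h u := by
        refine Finset.sum_congr rfl (fun u _ => ?_)
        rw [Finset.sum_congr rfl (fun y hy => by
          simp only [mem_filter, mem_univ, true_and] at hy
          rw [hy]), Finset.sum_const, key u, nsmul_eq_mul]
    _ = ((univ.filter (fun y : G => f y = 1)).card : ℂ) * ∑ u : H, h u := by
        rw [← Finset.mul_sum]
    _ = ((Fintype.card G : ℂ) / (Fintype.card H : ℂ)) * ∑ u : H, h u := by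
        rw [hcard]; field_simp

lemma card_coprime_filter (n : ℕ) [NeZero n] :
    ((univ.filter (fun x : ZMod n => Nat.gcd x.val n = 1)).card : ℕ) = Nat.totient n := by
  have h := sum_units_eq (n := n) (fun _ => (1 : ℂ))
  simp only [Finset.sum_const, nsmul_eq_mul, mul_one, Finset.card_univ] at h
  rw [← ZMod.card_units_eq_totient n]
  exact_mod_cast h

lemma moebius_sum (n : ℕ) [NeZero n] :
    ∑ u : (ZMod n)ˣ, ZMod.stdAddChar (u : ZMod n) = (ArithmeticFunction.moebius n : ℂ) := by
  classical
  rw [← sum_units_eq]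
  have indic : ∀ x : ZMod n, (if Nat.gcd x.val n = 1 then (1 : ℂ) else 0)
      = ∑ d ∈ (n.divisors).filter (· ∣ x.val), ((ArithmeticFunction.moebius d : ℤ) : ℂ) := by
    intro x
    have hg0 : Nat.gcd x.val n ≠ 0 := fun hcon =>
      (NeZero.ne n) (Nat.eq_zero_of_gcd_eq_zero_right hcon)
    have hdiv : (Nat.gcd x.val n).divisors = (n.divisors).filter (· ∣ x.val) := by
      ext e
      simp only [Nat.mem_divisors, Finset.mem_filter]
      constructor
      · rintro ⟨hd, -⟩
        exact ⟨⟨hd.trans (Nat.gcd_dvd_right _ _), NeZero.ne n⟩, hd.trans (Nat.gcd_dvd_left _ _)⟩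
      · rintro ⟨⟨hdn, -⟩, hdx⟩
        exact ⟨Nat.dvd_gcd hdx hdn, hg0⟩
    have hmz : (∑ e ∈ (Nat.gcd x.val n).divisors, ArithmeticFunction.moebius e)
        = if Nat.gcd x.val n = 1 then 1 else 0 := by
      calc (∑ e ∈ (Nat.gcd x.val n).divisors, ArithmeticFunction.moebius e)
          = ((ArithmeticFunction.moebius * ArithmeticFunction.zeta : ArithmeticFunction ℤ))
              (Nat.gcd x.val n) := (ArithmeticFunction.coe_mul_zeta_apply).symm
        _ = (1 : ArithmeticFunction ℤ) (Nat.gcd x.val n) := by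
            rw [ArithmeticFunction.moebius_mul_coe_zeta]
        _ = if Nat.gcd x.val n = 1 then 1 else 0 := ArithmeticFunction.one_apply
    rw [← hdiv]
    have h2 := congrArg (fun z : ℤ => (z : ℂ)) hmz
    push_cast at h2
    rw [← h2]
  calc ∑ x ∈ univ.filter (fun x : ZMod n => Nat.gcd x.val n = 1), ZMod.stdAddChar x
      = ∑ x : ZMod n, (if Nat.gcd x.val n = 1 then (1 : ℂ) else 0) * ZMod.stdAddChar x := by
        rw [Finset.sum_filter]
        exact Finset.sum_congr rfl (fun x _ => by split_ifs <;> simp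
        )
    _ = ∑ x : ZMod n, ∑ d ∈ (n.divisors).filter (· ∣ x.val),
          ((ArithmeticFunction.moebius d : ℤ) : ℂ) * ZMod.stdAddChar x := by
        refine Finset.sum_congr rfl (fun x _ => ?_)
        rw [indic x, Finset.sum_mul]
    _ = ∑ x : ZMod n, ∑ d ∈ n.divisors, (if d ∣ x.val then
          ((ArithmeticFunction.moebius d : ℤ) : ℂ) * ZMod.stdAddChar x else 0) := by
        refine Finset.sum_congr rfl (fun x _ => ?_)
        rw [Finset.sum_filter]
    _ = ∑ d ∈ n.divisors, ∑ x : ZMod n, (if d ∣ x.val then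
          ((ArithmeticFunction.moebius d : ℤ) : ℂ) * ZMod.stdAddChar x else 0) :=
        Finset.sum_comm
    _ = ∑ d ∈ n.divisors, ((ArithmeticFunction.moebius d : ℤ) : ℂ) *
          (∑ x ∈ univ.filter (fun x : ZMod n => d ∣ x.val), ZMod.stdAddChar x) := by
        refine Finset.sum_congr rfl (fun d _ => ?_)
        rw [← Finset.sum_filter, Finset.mul_sum]
    _ = ∑ d ∈ n.divisors, ((ArithmeticFunction.moebius d : ℤ) : ℂ) *
          (if d = n then 1 else 0) := by
        refine Finset.sum_congr rfl (fun d hd => ?_)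
        rw [Nat.mem_divisors] at hd
        obtain ⟨hdn, hn0⟩ := hd
        haveI : NeZero (n / d) := ⟨Nat.ne_of_gt (Nat.div_pos (Nat.le_of_dvd
          (Nat.pos_of_ne_zero hn0) hdn) (Nat.pos_of_dvd_of_pos hdn (Nat.pos_of_ne_zero hn0)))⟩
        congr 1
        rw [sum_dvd_filter hdn]
        calc ∑ t : ZMod (n / d), ZMod.stdAddChar ((d * t.val : ℕ) : ZMod n)
            = ∑ t : ZMod (n / d), ZMod.stdAddChar ((t.val : ℕ) : ZMod (n / d)) :=
              Finset.sum_congr rfl (fun t _ => psi_mul_div hdn t.val)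
          _ = ∑ t : ZMod (n / d), ZMod.stdAddChar t :=
              Finset.sum_congr rfl (fun t _ => by rw [ZMod.natCast_zmod_val])
          _ = if n / d = 1 then 1 else 0 := sum_psi (n / d)
          _ = if d = n then 1 else 0 := by
              congr 1
              simp only [eq_iff_iff]
              constructor
              · intro h1
                have := Nat.div_mul_cancel hdn
                rw [h1, one_mul] at this
                exact this
              · rintro rfl
                exact Nat.div_self (Nat.pos_of_ne_zero hn0)
    _ = (ArithmeticFunction.moebius n : ℂ) := by
        rw [Finset.sum_congr rfl (fun d _ => by rw [mul_ite, mul_one, mul_zero]),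
          Finset.sum_ite_eq' n.divisors n
            (fun d => ((ArithmeticFunction.moebius d : ℤ) : ℂ))]
        simp [Nat.mem_divisors_self n (NeZero.ne n)]

/-- The restricted character sum over residues coprime to `n`. -/
lemma coprime_char_sum (n : ℕ) [NeZero n] (m : ZMod n) :
    ∑ x ∈ univ.filter (fun x : ZMod n => Nat.gcd x.val n = 1), ZMod.stdAddChar (m * x)
      = ((Nat.totient n : ℂ) / (Nat.totient (n / Nat.gcd m.val n) : ℂ)) *
        ((ArithmeticFunction.moebius (n / Nat.gcd m.val n) : ℤ) : ℂ) := by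
  classical
  have hn0 : n ≠ 0 := NeZero.ne n
  set g := Nat.gcd m.val n with hg
  have hgdvd : g ∣ n := Nat.gcd_dvd_right _ _
  have hg0 : 0 < g := Nat.gcd_pos_of_pos_right _ (Nat.pos_of_ne_zero hn0)
  set Nn := n / g with hN
  haveI : NeZero Nn := ⟨Nat.ne_of_gt (Nat.div_pos (Nat.le_of_dvd
    (Nat.pos_of_ne_zero hn0) hgdvd) hg0)⟩
  set w : ℕ := m.val / g with hw
  have hwg : g * w = m.val := Nat.mul_div_cancel' (Nat.gcd_dvd_left _ _)
  have hcop : Nat.Coprime w Nn := Nat.coprime_div_gcd_div_gcd hg0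
  -- rewrite each character value
  have hchar : ∀ x : ZMod n, ZMod.stdAddChar (m * x)
      = ZMod.stdAddChar ((w : ZMod Nn) * ((x.val : ℕ) : ZMod Nn)) := by
    intro x
    have e1 : m * x = ((m.val * x.val : ℕ) : ZMod n) := by
      push_cast
      rw [ZMod.natCast_zmod_val, ZMod.natCast_zmod_val]
    have e2 : (m.val * x.val : ℕ) = g * (w * x.val) := by rw [← hwg]; ring
    rw [e1, e2, psi_mul_div hgdvd]
    congr 1
    push_cast
    ring
  rw [Finset.sum_congr rfl (fun x _ => hchar x), sum_units_eq
    (fun x => ZMod.stdAddChar ((w : ZMod Nn) * ((x.val : ℕ) : ZMod Nn)))]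
  have hNdvd : Nn ∣ n := Nat.div_dvd_of_dvd hgdvd
  -- replace (↑u).val cast by unitsMap
  have hval : ∀ u : (ZMod n)ˣ, (((u : ZMod n).val : ℕ) : ZMod Nn)
      = ((ZMod.unitsMap hNdvd u : (ZMod Nn)ˣ) : ZMod Nn) := by
    intro u
    rw [ZMod.natCast_val]
    rfl
  rw [Finset.sum_congr rfl (fun u _ => by rw [hval u])]
  rw [hom_sum (ZMod.unitsMap hNdvd) (ZMod.unitsMap_surjective hNdvd)
    (fun v => ZMod.stdAddChar ((w : ZMod Nn) * (v : ZMod Nn)))]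
  rw [ZMod.card_units_eq_totient, ZMod.card_units_eq_totient]
  congr 1
  -- now reindex by multiplication with the unit w
  set wu : (ZMod Nn)ˣ := ZMod.unitOfCoprime w hcop with hwu
  calc ∑ v : (ZMod Nn)ˣ, ZMod.stdAddChar ((w : ZMod Nn) * (v : ZMod Nn))
      = ∑ v : (ZMod Nn)ˣ, ZMod.stdAddChar (((wu * v : (ZMod Nn)ˣ) : ZMod Nn)) := by
        refine Finset.sum_congr rfl (fun v _ => ?_)
        rw [Units.val_mul, ZMod.coe_unitOfCoprime]
    _ = ∑ v : (ZMod Nn)ˣ, ZMod.stdAddChar ((v : ZMod Nn)) := by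
        exact Fintype.sum_equiv (Equiv.mulLeft wu) _ _ (fun v => rfl)
    _ = ((ArithmeticFunction.moebius Nn : ℤ) : ℂ) := moebius_sum Nn

lemma nt_identity {k l v : ℕ} (hk : k ≠ 0) (hl : l ∣ k) :
    (k / l) / Nat.gcd v (k / l)
      = (k / Nat.gcd v k) / Nat.gcd (k / Nat.gcd v k) l := by
  have hl0 : l ≠ 0 := by rintro rfl; exact hk (Nat.eq_zero_of_zero_dvd hl)
  set g := Nat.gcd v k with hgdef
  have hgdvd : g ∣ k := Nat.gcd_dvd_right _ _
  have hgv : g ∣ v := Nat.gcd_dvd_left _ _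
  have hg0 : g ≠ 0 := Nat.ne_of_gt (Nat.gcd_pos_of_pos_right _ (Nat.pos_of_ne_zero hk))
  set δ := k / g with hδdef
  set gv := Nat.gcd v (k / l) with hgvdef
  have hgv_dvd : gv ∣ k / l := Nat.gcd_dvd_right _ _
  have hA : Nat.gcd (l * v) k = l * gv := by
    have h0 : Nat.gcd (l * v) (l * (k / l)) = l * Nat.gcd v (k / l) := Nat.gcd_mul_left _ _ _
    rwa [Nat.mul_div_cancel' hl] at h0
  have hB : Nat.gcd (l * g) k = g * Nat.gcd l δ := by
    have h0 : Nat.gcd (g * l) (g * δ) = g * Nat.gcd l δ := Nat.gcd_mul_left _ _ _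
    rwa [Nat.mul_div_cancel' hgdvd, Nat.mul_comm g l] at h0
  have hC : Nat.gcd (l * v) k = Nat.gcd (l * g) k := by
    apply Nat.dvd_antisymm
    · apply Nat.dvd_gcd _ (Nat.gcd_dvd_right _ _)
      have h1 : Nat.gcd (l * v) k ∣ Nat.gcd (l * v) (l * k) :=
        Nat.dvd_gcd (Nat.gcd_dvd_left _ _) ((Nat.gcd_dvd_right _ _).trans (dvd_mul_left k l))
      rwa [Nat.gcd_mul_left] at h1
    · exact Nat.dvd_gcd ((Nat.gcd_dvd_left _ _).trans
        (Nat.mul_dvd_mul_left l hgv)) (Nat.gcd_dvd_right _ _)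
  have hL : (k / l) / gv * Nat.gcd (l * v) k = k := by
    rw [hA]
    calc (k / l) / gv * (l * gv) = ((k / l) / gv * gv) * l := by ring
      _ = (k / l) * l := by rw [Nat.div_mul_cancel hgv_dvd]
      _ = k := Nat.div_mul_cancel hl
  have hR : δ / Nat.gcd δ l * Nat.gcd (l * v) k = k := by
    rw [hC, hB, Nat.gcd_comm δ l]
    calc δ / Nat.gcd l δ * (g * Nat.gcd l δ) = (δ / Nat.gcd l δ * Nat.gcd l δ) * g := by ring
      _ = δ * g := by rw [Nat.div_mul_cancel (Nat.gcd_dvd_right l δ)]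
      _ = k := by rw [hδdef, Nat.div_mul_cancel hgdvd]
  have hgcd0 : Nat.gcd (l * v) k ≠ 0 :=
    Nat.ne_of_gt (Nat.gcd_pos_of_pos_right _ (Nat.pos_of_ne_zero hk))
  exact Nat.eq_of_mul_eq_mul_right (Nat.pos_of_ne_zero hgcd0) (hL.trans hR.symm)

lemma gcd_char_sum {k l : ℕ} [NeZero k] [NeZero (k / l)] (hl : l ∣ k) (m : ZMod k) :
    ∑ x ∈ univ.filter (fun x : ZMod k => Nat.gcd x.val k = l), ZMod.stdAddChar (m * x)
      = ((cCoeff k l (k / Nat.gcd m.val k) : ℚ) : ℂ) := by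
  rw [sum_gcd_eq hl]
  have hterm : ∀ t : ZMod (k / l), ZMod.stdAddChar (m * ((l * t.val : ℕ) : ZMod k))
      = ZMod.stdAddChar (((m.val : ℕ) : ZMod (k / l)) * t) := by
    intro t
    have e1 : m * ((l * t.val : ℕ) : ZMod k) = ((l * (m.val * t.val) : ℕ) : ZMod k) := by
      push_cast
      rw [ZMod.natCast_zmod_val]
      ring
    rw [e1, psi_mul_div hl]
    push_cast
    rw [ZMod.natCast_zmod_val]
  rw [Finset.sum_congr rfl (fun t _ => hterm t),
    coprime_char_sum (k / l) ((m.val : ℕ) : ZMod (k / l))]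
  have hvv : Nat.gcd (((m.val : ℕ) : ZMod (k / l))).val (k / l) = Nat.gcd m.val (k / l) := by
    rw [ZMod.val_natCast, ← Nat.gcd_rec, Nat.gcd_comm]
  rw [hvv, nt_identity (NeZero.ne k) hl (v := m.val)]
  rw [cCoeff]
  push_cast
  ring

lemma card_gcd_filter {k l : ℕ} [NeZero k] [NeZero (k / l)] (hl : l ∣ k) :
    ((univ.filter (fun x : ZMod k => Nat.gcd x.val k = l)).card : ℕ)
      = Nat.totient (k / l) := by
  have h := sum_gcd_eq hl (fun _ => (1 : ℂ))
  simp only [Finset.sum_const, nsmul_eq_mul, mul_one] at h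
  rw [← card_coprime_filter (k / l)]
  exact_mod_cast h

lemma even_char_sum {k : ℕ} [NeZero k] (hk2 : 2 ∣ k) [NeZero (k / 2)] (m : ZMod k) :
    ∑ x ∈ univ.filter (fun x : ZMod k => Even (Nat.gcd x.val k)), ZMod.stdAddChar (m * x)
      = if (k / Nat.gcd m.val k) ∣ 2 then ((k / 2 : ℕ) : ℂ) else 0 := by
  classical
  have hk0 : k ≠ 0 := NeZero.ne k
  have hfil : univ.filter (fun x : ZMod k => Even (Nat.gcd x.val k))
      = univ.filter (fun x : ZMod k => 2 ∣ x.val) := by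
    ext x
    simp only [mem_filter, mem_univ, true_and, even_iff_two_dvd]
    constructor
    · intro h; exact h.trans (Nat.gcd_dvd_left _ _)
    · intro h; exact Nat.dvd_gcd h hk2
  rw [hfil, sum_dvd_filter hk2 (fun x => ZMod.stdAddChar (m * x))]
  have hterm : ∀ t : ZMod (k / 2), ZMod.stdAddChar (m * ((2 * t.val : ℕ) : ZMod k))
      = ZMod.stdAddChar ((((m.val : ℕ) : ZMod (k / 2))) * t) := by
    intro t
    have e1 : m * ((2 * t.val : ℕ) : ZMod k) = ((2 * (m.val * t.val) : ℕ) : ZMod k) := by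
      push_cast
      rw [ZMod.natCast_zmod_val]
      ring
    rw [e1, psi_mul_div hk2]
    push_cast
    rw [ZMod.natCast_zmod_val]
  rw [Finset.sum_congr rfl (fun t _ => hterm t)]
  have := AddChar.sum_mulShift (((m.val : ℕ) : ZMod (k / 2)))
    (ZMod.isPrimitive_stdAddChar (k / 2))
  rw [Finset.sum_congr rfl (fun t _ => by rw [mul_comm]), this, ZMod.card]
  have hcond : (((m.val : ℕ) : ZMod (k / 2)) = 0) ↔ ((k / Nat.gcd m.val k) ∣ 2) := by
    rw [ZMod.natCast_eq_zero_iff]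
    set g := Nat.gcd m.val k with hg
    have hgdvd : g ∣ k := Nat.gcd_dvd_right _ _
    have hg0 : g ≠ 0 := Nat.ne_of_gt (Nat.gcd_pos_of_pos_right _ (Nat.pos_of_ne_zero hk0))
    have e1 : 2 * (k / 2) = k := Nat.mul_div_cancel' hk2
    have e2 : (k / g) * g = k := Nat.div_mul_cancel hgdvd
    calc (k / 2 ∣ m.val) ↔ (k / 2 ∣ g) :=
          ⟨fun h => Nat.dvd_gcd h (Nat.div_dvd_of_dvd hk2),
           fun h => h.trans (Nat.gcd_dvd_left _ _)⟩
      _ ↔ (2 * (k / 2) ∣ 2 * g) := (mul_dvd_mul_iff_left (two_ne_zero)).symm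
      _ ↔ (k ∣ 2 * g) := by rw [e1]
      _ ↔ ((k / g) * g ∣ 2 * g) := by rw [e2]
      _ ↔ ((k / g) ∣ 2) := mul_dvd_mul_iff_right hg0
  rw [apply_ite (fun z : ℕ => (z : ℂ)), if_congr hcond rfl rfl]
  simp

lemma psi_finset_sum {k : ℕ} [NeZero k] {ι : Type*} (s : Finset ι) (f : ι → ZMod k) :
    ZMod.stdAddChar (∑ i ∈ s, f i) = ∏ i ∈ s, ZMod.stdAddChar (f i) := by
  classical
  induction s using Finset.induction_on with
  | empty => simp
  | insert _ _ hx ih =>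
      rw [Finset.sum_insert hx, Finset.prod_insert hx, AddChar.map_add_eq_mul, ih]

lemma piFinset_char_sum {k : ℕ} [NeZero k] {ι : Type*} [Fintype ι] [DecidableEq ι] (m : ZMod k)
    (pred : ι → ZMod k → Prop) [∀ i x, Decidable (pred i x)] :
    ∑ A ∈ Fintype.piFinset (fun i => univ.filter (fun x : ZMod k => pred i x)),
      ZMod.stdAddChar (m * ∑ i, A i)
      = ∏ i, ∑ x ∈ univ.filter (fun x : ZMod k => pred i x), ZMod.stdAddChar (m * x) := by
  rw [Finset.prod_univ_sum]
  refine Finset.sum_congr rfl (fun A hA => ?_)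
  rw [Finset.mul_sum, psi_finset_sum]

lemma sum4_mul {α β γ ε : Type*} (sA : Finset α) (sB : Finset β) (sC : Finset γ) (sD : Finset ε)
    (fA : α → ℂ) (fB : β → ℂ) (fC : γ → ℂ) (fD : ε → ℂ) :
    ∑ A ∈ sA, ∑ B ∈ sB, ∑ C ∈ sC, ∑ D ∈ sD, fA A * fB B * fC C * fD D
      = (∑ A ∈ sA, fA A) * (∑ B ∈ sB, fB B) * (∑ C ∈ sC, fC C) * (∑ D ∈ sD, fD D) := by
  simp only [← Finset.mul_sum, ← Finset.sum_mul]

lemma orth {k : ℕ} [NeZero k] (v : ZMod k) :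
    (if v = 0 then (1 : ℂ) else 0) = (1 / (k : ℂ)) * ∑ m : ZMod k, ZMod.stdAddChar (m * v) := by
  classical
  have h := AddChar.sum_mulShift v (ZMod.isPrimitive_stdAddChar k)
  rw [h, ZMod.card]
  have hk0 : (k : ℂ) ≠ 0 := Nat.cast_ne_zero.2 (NeZero.ne k)
  split_ifs <;> field_simp <;> simp

set_option maxHeartbeats 1000000 in
lemma step1 {k : ℕ} [NeZero k] (a b c d : ℕ) (N : Fin b → ℕ) (M : Fin d → ℕ) :
    ((univ.filter (fun p : (Fin a → ZMod k) × (Fin b → ZMod k) × (Fin c → ZMod k) × (Fin d → ZMod k) =>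
        (∀ l, Nat.gcd ((p.1 l).val) k = 1) ∧
        (∀ j, Nat.gcd ((p.2.1 j).val) k = N j) ∧
        (∀ s, Even (Nat.gcd ((p.2.2.1 s).val) k)) ∧
        (∀ r, Nat.gcd ((p.2.2.2 r).val) k = M r) ∧
        ((∑ l, p.1 l) + (∑ j, p.2.1 j) + (∑ s, p.2.2.1 s) + (∑ r, p.2.2.2 r) = 0))).card : ℂ)
      = (1 / (k : ℂ)) * ∑ m : ZMod k,
          (∑ x ∈ univ.filter (fun x : ZMod k => Nat.gcd x.val k = 1),
              ZMod.stdAddChar (m * x)) ^ a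
          * (∏ j, ∑ x ∈ univ.filter (fun x : ZMod k => Nat.gcd x.val k = N j),
              ZMod.stdAddChar (m * x))
          * (∑ x ∈ univ.filter (fun x : ZMod k => Even (Nat.gcd x.val k)),
              ZMod.stdAddChar (m * x)) ^ c
          * (∏ r, ∑ x ∈ univ.filter (fun x : ZMod k => Nat.gcd x.val k = M r),
              ZMod.stdAddChar (m * x)) := by
  classical
  set SA := Fintype.piFinset (fun _ : Fin a =>
    univ.filter (fun x : ZMod k => Nat.gcd x.val k = 1)) with hSA
  set SB := Fintype.piFinset (fun j : Fin b =>
    univ.filter (fun x : ZMod k => Nat.gcd x.val k = N j)) with hSB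
  set SC := Fintype.piFinset (fun _ : Fin c =>
    univ.filter (fun x : ZMod k => Even (Nat.gcd x.val k))) with hSC
  set SD := Fintype.piFinset (fun r : Fin d =>
    univ.filter (fun x : ZMod k => Nat.gcd x.val k = M r)) with hSD
  have hfil : (univ.filter (fun p : (Fin a → ZMod k) × (Fin b → ZMod k) × (Fin c → ZMod k) ×
        (Fin d → ZMod k) =>
        (∀ l, Nat.gcd ((p.1 l).val) k = 1) ∧
        (∀ j, Nat.gcd ((p.2.1 j).val) k = N j) ∧
        (∀ s, Even (Nat.gcd ((p.2.2.1 s).val) k)) ∧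
        (∀ r, Nat.gcd ((p.2.2.2 r).val) k = M r) ∧
        ((∑ l, p.1 l) + (∑ j, p.2.1 j) + (∑ s, p.2.2.1 s) + (∑ r, p.2.2.2 r) = 0)))
      = (SA ×ˢ SB ×ˢ SC ×ˢ SD).filter (fun p =>
          (∑ l, p.1 l) + (∑ j, p.2.1 j) + (∑ s, p.2.2.1 s) + (∑ r, p.2.2.2 r) = 0) := by
    ext p
    simp only [Finset.mem_filter, Finset.mem_univ, true_and, Finset.mem_product,
      hSA, hSB, hSC, hSD, Fintype.mem_piFinset]
    tauto
  rw [hfil, Finset.card_filter, Nat.cast_sum]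
  simp only [apply_ite (Nat.cast : ℕ → ℂ), Nat.cast_one, Nat.cast_zero]
  rw [Finset.sum_product]
  have e2 : ∀ A : Fin a → ZMod k,
      (∑ q ∈ SB ×ˢ SC ×ˢ SD, if (∑ l, A l) + (∑ j, q.1 j) + (∑ s, q.2.1 s) + (∑ r, q.2.2 r) = 0
          then (1 : ℂ) else 0)
      = ∑ B ∈ SB, ∑ C ∈ SC, ∑ D ∈ SD,
          (if (∑ l, A l) + (∑ j, B j) + (∑ s, C s) + (∑ r, D r) = 0 then (1 : ℂ) else 0) := by
    intro A
    rw [Finset.sum_product]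
    exact Finset.sum_congr rfl (fun B _ => Finset.sum_product _ _ _)
  rw [Finset.sum_congr rfl (fun A _ => e2 A)]
  have e3 : ∀ (A : Fin a → ZMod k) (B : Fin b → ZMod k) (C : Fin c → ZMod k)
      (D : Fin d → ZMod k) (m : ZMod k),
      ZMod.stdAddChar (m * ((∑ l, A l) + (∑ j, B j) + (∑ s, C s) + (∑ r, D r)))
        = ZMod.stdAddChar (m * ∑ l, A l) * ZMod.stdAddChar (m * ∑ j, B j)
          * ZMod.stdAddChar (m * ∑ s, C s) * ZMod.stdAddChar (m * ∑ r, D r) := by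
    intro A B C D m
    rw [mul_add, mul_add, mul_add, AddChar.map_add_eq_mul, AddChar.map_add_eq_mul,
      AddChar.map_add_eq_mul]
  have e4 : ∑ A ∈ SA, ∑ B ∈ SB, ∑ C ∈ SC, ∑ D ∈ SD,
      (if (∑ l, A l) + (∑ j, B j) + (∑ s, C s) + (∑ r, D r) = 0 then (1 : ℂ) else 0)
      = (1 / (k : ℂ)) * ∑ A ∈ SA, ∑ B ∈ SB, ∑ C ∈ SC, ∑ D ∈ SD, ∑ m : ZMod k,
          ZMod.stdAddChar (m * ∑ l, A l) * ZMod.stdAddChar (m * ∑ j, B j)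
            * ZMod.stdAddChar (m * ∑ s, C s) * ZMod.stdAddChar (m * ∑ r, D r) := by
    rw [Finset.mul_sum]
    refine Finset.sum_congr rfl (fun A _ => ?_)
    rw [Finset.mul_sum]
    refine Finset.sum_congr rfl (fun B _ => ?_)
    rw [Finset.mul_sum]
    refine Finset.sum_congr rfl (fun C _ => ?_)
    rw [Finset.mul_sum]
    refine Finset.sum_congr rfl (fun D _ => ?_)
    rw [orth]
    exact congrArg (fun z => (1 / (k : ℂ)) * z)
      (Finset.sum_congr rfl (fun m _ => e3 A B C D m))
  rw [e4]
  congr 1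
  calc ∑ A ∈ SA, ∑ B ∈ SB, ∑ C ∈ SC, ∑ D ∈ SD, ∑ m : ZMod k,
        ZMod.stdAddChar (m * ∑ l, A l) * ZMod.stdAddChar (m * ∑ j, B j)
          * ZMod.stdAddChar (m * ∑ s, C s) * ZMod.stdAddChar (m * ∑ r, D r)
      = ∑ A ∈ SA, ∑ B ∈ SB, ∑ C ∈ SC, ∑ m : ZMod k, ∑ D ∈ SD,
        ZMod.stdAddChar (m * ∑ l, A l) * ZMod.stdAddChar (m * ∑ j, B j)
          * ZMod.stdAddChar (m * ∑ s, C s) * ZMod.stdAddChar (m * ∑ r, D r) :=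
        Finset.sum_congr rfl fun A _ => Finset.sum_congr rfl fun B _ =>
          Finset.sum_congr rfl fun C _ => Finset.sum_comm
    _ = ∑ A ∈ SA, ∑ B ∈ SB, ∑ m : ZMod k, ∑ C ∈ SC, ∑ D ∈ SD,
        ZMod.stdAddChar (m * ∑ l, A l) * ZMod.stdAddChar (m * ∑ j, B j)
          * ZMod.stdAddChar (m * ∑ s, C s) * ZMod.stdAddChar (m * ∑ r, D r) :=
        Finset.sum_congr rfl fun A _ => Finset.sum_congr rfl fun B _ => Finset.sum_comm
    _ = ∑ A ∈ SA, ∑ m : ZMod k, ∑ B ∈ SB, ∑ C ∈ SC, ∑ D ∈ SD,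
        ZMod.stdAddChar (m * ∑ l, A l) * ZMod.stdAddChar (m * ∑ j, B j)
          * ZMod.stdAddChar (m * ∑ s, C s) * ZMod.stdAddChar (m * ∑ r, D r) :=
        Finset.sum_congr rfl fun A _ => Finset.sum_comm
    _ = ∑ m : ZMod k, ∑ A ∈ SA, ∑ B ∈ SB, ∑ C ∈ SC, ∑ D ∈ SD,
        ZMod.stdAddChar (m * ∑ l, A l) * ZMod.stdAddChar (m * ∑ j, B j)
          * ZMod.stdAddChar (m * ∑ s, C s) * ZMod.stdAddChar (m * ∑ r, D r) := Finset.sum_comm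
    _ = ∑ m : ZMod k,
          (∑ x ∈ univ.filter (fun x : ZMod k => Nat.gcd x.val k = 1),
              ZMod.stdAddChar (m * x)) ^ a
          * (∏ j, ∑ x ∈ univ.filter (fun x : ZMod k => Nat.gcd x.val k = N j),
              ZMod.stdAddChar (m * x))
          * (∑ x ∈ univ.filter (fun x : ZMod k => Even (Nat.gcd x.val k)),
              ZMod.stdAddChar (m * x)) ^ c
          * (∏ r, ∑ x ∈ univ.filter (fun x : ZMod k => Nat.gcd x.val k = M r),
              ZMod.stdAddChar (m * x)) := by
        refine Finset.sum_congr rfl (fun m _ => ?_)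
        rw [sum4_mul SA SB SC SD]
        rw [hSA, piFinset_char_sum m (fun _ x => Nat.gcd x.val k = 1),
          hSB, piFinset_char_sum m (fun j x => Nat.gcd x.val k = N j),
          hSC, piFinset_char_sum m (fun _ x => Even (Nat.gcd x.val k)),
          hSD, piFinset_char_sum m (fun r x => Nat.gcd x.val k = M r)]
        rw [Finset.prod_const, Finset.card_univ, Fintype.card_fin,
          Finset.prod_const, Finset.card_univ, Fintype.card_fin]
end CRT

open CRT in
set_option maxHeartbeats 1000000 in
/-- Character-sum count: the number of tuples `(A, B, C, D)` in `(ℤ/kℤ)^{a+b+c+d}` with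
`gcd(Aₗ,k)=1`, `gcd(Bⱼ,k)=Nⱼ`, `gcd(Cₛ,k)` even, `gcd(D_r,k)=M_r`, summing to `0 mod k`,
equals `(1/k) Σ_{δ∣k} c(k,1,δ)^a Π_j c(k,Nⱼ,δ) γ(k,δ,c) Π_r c(k,M_r,δ)`. -/
theorem card_restricted_tuples (k : ℕ) (hk : 0 < k) (a b c d : ℕ)
    (N : Fin b → ℕ) (M : Fin d → ℕ)
    (hN : ∀ j, N j ∣ k) (hM : ∀ r, M r ∣ k ∧ M r < k) :
    (Nat.card {p : (Fin a → ZMod k) × (Fin b → ZMod k) × (Fin c → ZMod k) × (Fin d → ZMod k) //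
        (∀ l, Nat.gcd ((p.1 l).val) k = 1) ∧
        (∀ j, Nat.gcd ((p.2.1 j).val) k = N j) ∧
        (∀ s, Even (Nat.gcd ((p.2.2.1 s).val) k)) ∧
        (∀ r, Nat.gcd ((p.2.2.2 r).val) k = M r) ∧
        ((∑ l, p.1 l) + (∑ j, p.2.1 j) + (∑ s, p.2.2.1 s) + (∑ r, p.2.2.2 r) = 0)} : ℚ)
    = (1 / k) * ∑ δ ∈ Nat.divisors k,
        cCoeff k 1 δ ^ a * (∏ j, cCoeff k (N j) δ) * gammaCoeff k δ c *
          (∏ r, cCoeff k (M r) δ) := by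
  classical
  haveI : NeZero k := ⟨hk.ne'⟩
  have hdivNZ : ∀ {l : ℕ}, l ∣ k → NeZero (k / l) := fun {l} hl =>
    ⟨Nat.ne_of_gt (Nat.div_pos (Nat.le_of_dvd hk hl) (Nat.pos_of_dvd_of_pos hl hk))⟩
  apply Rat.cast_injective (α := ℂ)
  push_cast
  rw [Nat.card_eq_fintype_card, Fintype.card_subtype]
  rw [step1 a b c d N M]
  congr 1
  have hSl : ∀ {l : ℕ}, l ∣ k → ∀ m : ZMod k,
      ∑ x ∈ univ.filter (fun x : ZMod k => Nat.gcd x.val k = l), ZMod.stdAddChar (m * x)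
        = ((cCoeff k l (k / Nat.gcd m.val k) : ℚ) : ℂ) := by
    intro l hl m
    haveI := hdivNZ hl
    exact gcd_char_sum hl m
  have hT : ∀ m : ZMod k,
      ∑ x ∈ univ.filter (fun x : ZMod k => Even (Nat.gcd x.val k)), ZMod.stdAddChar (m * x)
        = (if Even k then (if (k / Nat.gcd m.val k) ∣ 2 then ((k / 2 : ℕ) : ℂ) else 0)
            else 0) := by
    intro m
    by_cases hev : Even k
    · haveI := hdivNZ (even_iff_two_dvd.mp hev)
      rw [if_pos hev]
      exact even_char_sum (even_iff_two_dvd.mp hev) m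
    · rw [if_neg hev, Finset.filter_false_of_mem, Finset.sum_empty]
      intro x _ hevg
      exact hev (even_iff_two_dvd.mpr
        ((even_iff_two_dvd.mp hevg).trans (Nat.gcd_dvd_right _ _)))
  set W : ℕ → ℂ := fun δ =>
    ((cCoeff k 1 δ : ℚ) : ℂ) ^ a * (∏ j, ((cCoeff k (N j) δ : ℚ) : ℂ))
      * (if Even k then (if δ ∣ 2 then ((k / 2 : ℕ) : ℂ) else 0) else 0) ^ c
      * (∏ r, ((cCoeff k (M r) δ : ℚ) : ℂ)) with hW
  calc ∑ m : ZMod k,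
        (∑ x ∈ univ.filter (fun x : ZMod k => Nat.gcd x.val k = 1),
            ZMod.stdAddChar (m * x)) ^ a
        * (∏ j, ∑ x ∈ univ.filter (fun x : ZMod k => Nat.gcd x.val k = N j),
            ZMod.stdAddChar (m * x))
        * (∑ x ∈ univ.filter (fun x : ZMod k => Even (Nat.gcd x.val k)),
            ZMod.stdAddChar (m * x)) ^ c
        * (∏ r, ∑ x ∈ univ.filter (fun x : ZMod k => Nat.gcd x.val k = M r),
            ZMod.stdAddChar (m * x))
      = ∑ m : ZMod k, W (k / Nat.gcd m.val k) := by
        refine Finset.sum_congr rfl (fun m _ => ?_)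
        rw [hSl (one_dvd k) m, hT m,
          Finset.prod_congr rfl (fun j _ => hSl (hN j) m),
          Finset.prod_congr rfl (fun r _ => hSl (hM r).1 m)]
    _ = ∑ g ∈ k.divisors, ∑ m ∈ univ.filter (fun m : ZMod k => Nat.gcd m.val k = g),
          W (k / Nat.gcd m.val k) :=
        (Finset.sum_fiberwise_of_maps_to
          (fun m _ => Nat.mem_divisors.mpr ⟨Nat.gcd_dvd_right _ _, hk.ne'⟩) _).symm
    _ = ∑ g ∈ k.divisors, ((Nat.totient (k / g) : ℕ) : ℂ) * W (k / g) := by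
        refine Finset.sum_congr rfl (fun g hg => ?_)
        have hgd : g ∣ k := (Nat.mem_divisors.mp hg).1
        haveI := hdivNZ hgd
        rw [Finset.sum_congr rfl (fun m hm => by
            rw [(Finset.mem_filter.mp hm).2]),
          Finset.sum_const, card_gcd_filter hgd, nsmul_eq_mul]
    _ = ∑ δ ∈ k.divisors, ((Nat.totient δ : ℕ) : ℂ) * W δ :=
        Nat.sum_div_divisors k (fun δ => ((Nat.totient δ : ℕ) : ℂ) * W δ)
    _ = ∑ δ ∈ k.divisors,
          ((cCoeff k 1 δ : ℚ) : ℂ) ^ a * (∏ j, ((cCoeff k (N j) δ : ℚ) : ℂ))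
            * ((gammaCoeff k δ c : ℚ) : ℂ) * (∏ r, ((cCoeff k (M r) δ : ℚ) : ℂ)) := by
        refine Finset.sum_congr rfl (fun δ hδ => ?_)
        have hγ : ((Nat.totient δ : ℕ) : ℂ)
            * (if Even k then (if δ ∣ 2 then ((k / 2 : ℕ) : ℂ) else 0) else 0) ^ c
            = ((gammaCoeff k δ c : ℚ) : ℂ) := by
          by_cases hc : c = 0
          · subst hc
            rw [gammaCoeff, if_pos rfl]
            push_cast
            ring
          · rw [gammaCoeff, if_neg hc]
            by_cases hev : Even k
            · rw [if_neg (not_not_intro hev), if_pos hev]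
              by_cases hδ2 : δ ∣ 2
              · have hδ12 : δ = 1 ∨ δ = 2 := (Nat.dvd_prime Nat.prime_two).mp hδ2
                have hφ : Nat.totient δ = 1 := by
                  rcases hδ12 with h | h <;> simp [h, Nat.totient_two]
                rw [if_pos hδ12, if_pos hδ2, hφ,
                  Nat.cast_div (even_iff_two_dvd.mp hev) (two_ne_zero)]
                push_cast
                ring
              · have hn12 : ¬(δ = 1 ∨ δ = 2) := by
                  rintro (rfl | rfl) <;> exact hδ2 (by norm_num)
                rw [if_neg hδ2, if_neg hn12, zero_pow hc, mul_zero, Rat.cast_zero]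
            · rw [if_neg hev, if_pos hev, zero_pow hc, mul_zero, Rat.cast_zero]
        rw [hW]
        simp only []
        rw [← hγ]
        ring
  done
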